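/- arXiv:2009.11162 — 2 statements merged into one kernel-verified Lean document; each statement's English description precedes it below -/
import Mathlib

section
/- Let E : ℝ^m → ℝ be three times continuously differentiable, let θ₀ ∈ ℝ^m, and for a step size h > 0 define the modified loss Ẽ_h(θ) = E(θ) + (h/4)‖∇E(θ)‖². Then there exist constants C > 0 and h₀ > 0 such that for every h ∈ (0, h₀] and every curve θ̃ : [0, h] → ℝ^m satisfying θ̃(0) = θ₀ and θ̃′(t) = −∇Ẽ_h(θ̃(t)) for all t ∈ [0, h], the one-step error of gradient descent satisfies ‖(θ₀ − h∇E(θ₀)) − θ̃(h)‖ ≤ C·h³. -/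
set_option maxHeartbeats 4000000

open Set InnerProductSpace ContinuousLinearMap intervalIntegral

section aux

variable {m : ℕ}
local notation "V" => EuclideanSpace ℝ (Fin m)

private theorem gradNormSq' (F : V → V) (x : V) (hF : DifferentiableAt ℝ F x) :
    HasGradientAt (fun θ => ‖F θ‖ ^ 2) ((2:ℝ) • (adjoint (fderiv ℝ F x)) (F x)) x := by
  rw [hasGradientAt_iff_hasFDerivAt]
  have hd := hF.hasFDerivAt
  have h1 : HasFDerivAt (fun θ => @inner ℝ _ _ (F θ) (F θ))
      ((fderivInnerCLM ℝ (F x, F x)).comp ((fderiv ℝ F x).prod (fderiv ℝ F x))) x :=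
    hd.inner ℝ hd
  have h2 : (fun θ => ‖F θ‖ ^ 2) = fun θ => @inner ℝ _ _ (F θ) (F θ) := by
    ext θ; rw [real_inner_self_eq_norm_sq]
  rw [h2]
  refine h1.congr_fderiv (Eq.symm ?_)
  ext v
  simp only [toDual_apply_apply, coe_comp', Function.comp_apply, prod_apply, fderivInnerCLM_apply,
    real_inner_smul_left, adjoint_inner_left]
  rw [real_inner_comm (F x) ((fderiv ℝ F x) v)]
  ring

private theorem hess_symm' (E : V → ℝ) (hE : ContDiff ℝ 3 E) (x : V) :
    adjoint (fderiv ℝ (gradient E) x) = fderiv ℝ (gradient E) x := by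
  have hsymm : IsSymmSndFDerivAt ℝ E x := (hE.contDiffAt).isSymmSndFDerivAt (by norm_num)
  have key : ∀ v w : V, @inner ℝ _ _ ((fderiv ℝ (gradient E) x) v) w
      = fderiv ℝ (fderiv ℝ E) x v w := by
    intro v w
    have h0 : gradient E = ((toDual ℝ V).symm ∘ fderiv ℝ E) := rfl
    rw [h0, LinearIsometryEquiv.comp_fderiv]
    rw [ContinuousLinearMap.comp_apply]
    exact toDual_symm_apply
  symm
  rw [eq_adjoint_iff]
  intro v w
  rw [key v w, real_inner_comm ((fderiv ℝ (gradient E) x) w) v, key w v]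
  exact hsymm.eq v w

private theorem gradAdd' (f g : V → ℝ) (a b : V) (x : V) (c : ℝ)
    (hf : HasGradientAt f a x) (hg : HasGradientAt g b x) :
    HasGradientAt (fun y => f y + c * g y) (a + c • b) x := by
  rw [hasGradientAt_iff_hasFDerivAt] at *
  have := hf.add ((hg.const_mul c))
  refine this.congr_fderiv (Eq.symm ?_)
  ext v
  simp [toDual_apply_apply, inner_add_left, real_inner_smul_left]

private theorem adjNorm' (A : V →L[ℝ] V) : ‖(adjoint A : V →L[ℝ] V)‖ = ‖A‖ :=
  (adjoint : (V →L[ℝ] V) ≃ₗᵢ⋆[ℝ] (V →L[ℝ] V)).norm_map A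

private theorem contAdj' : Continuous (fun A : V →L[ℝ] V => (adjoint A : V →L[ℝ] V)) :=
  (adjoint : (V →L[ℝ] V) ≃ₗᵢ⋆[ℝ] (V →L[ℝ] V)).continuous

end aux

/-- For a C³ loss `E : ℝ^m → ℝ` and initial point `θ₀`, there are `C > 0`
and `h₀ > 0` such that for every step size `h ∈ (0, h₀]` and every solution `θt` of the
gradient flow of the modified loss `Ẽ_h(θ) = E(θ) + (h/4)‖∇E(θ)‖²` starting at `θ₀`,
the one-step error of gradient descent satisfies
`‖(θ₀ − h∇E(θ₀)) − θt(h)‖ ≤ C h³`. -/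
theorem one_step_error_modified_flow (m : ℕ) (E : EuclideanSpace ℝ (Fin m) → ℝ)
    (hE : ContDiff ℝ 3 E) (θ₀ : EuclideanSpace ℝ (Fin m)) :
    ∃ C > (0 : ℝ), ∃ h₀ > (0 : ℝ), ∀ h : ℝ, 0 < h → h ≤ h₀ →
      ∀ θt : ℝ → EuclideanSpace ℝ (Fin m), θt 0 = θ₀ →
        (∀ t ∈ Set.Icc (0 : ℝ) h,
          HasDerivAt θt
            (-(gradient (fun θ => E θ + (h / 4) * ‖gradient E θ‖ ^ 2) (θt t))) t) →
        ‖(θ₀ - h • gradient E θ₀) - θt h‖ ≤ C * h ^ 3 := by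
  classical
  set F := gradient E with hFdef
  have hEdiff : Differentiable ℝ E := hE.differentiable (by norm_num)
  have hF : ContDiff ℝ 2 F := by
    have h1 : ContDiff ℝ 2 (fderiv ℝ E) := hE.fderiv_right (by norm_num)
    exact ((toDual ℝ (EuclideanSpace ℝ (Fin m))).symm.contDiff).comp h1
  have hFdiff : Differentiable ℝ F := hF.differentiable (by norm_num)
  set DF := fderiv ℝ F with hDFdef
  have hDF : ContDiff ℝ 1 DF := hF.fderiv_right (by norm_num)
  have hDFdiff : Differentiable ℝ DF := hDF.differentiable (by norm_num)
  have hD2cont : Continuous (fderiv ℝ DF) := (hDF.fderiv_right (m := 0) (by norm_num)).continuous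
  set P := fun x => (2:ℝ) • (adjoint (DF x)) (F x) with hPdef
  have hPgrad : ∀ x, HasGradientAt (fun θ => ‖F θ‖ ^ 2) (P x) x :=
    fun x => gradNormSq' F x (hFdiff x)
  have hPcont : Continuous P := by
    refine Continuous.smul (f := fun _ => (2:ℝ)) continuous_const ?_
    exact ((contAdj'.comp hDF.continuous).clm_apply hF.continuous)
  -- the compact ball and constants
  set B := Metric.closedBall θ₀ 1 with hBdef
  have hBcomp : IsCompact B := isCompact_closedBall θ₀ 1
  have hBconv : Convex ℝ B := convex_closedBall θ₀ 1
  have hθ₀B : θ₀ ∈ B := Metric.mem_closedBall_self zero_le_one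
  obtain ⟨C₀, hC₀⟩ := hBcomp.exists_bound_of_continuousOn (hF.continuous.continuousOn)
  obtain ⟨C₁, hC₁⟩ := hBcomp.exists_bound_of_continuousOn (hDF.continuous.continuousOn)
  obtain ⟨C₂, hC₂⟩ := hBcomp.exists_bound_of_continuousOn (f := fderiv ℝ DF) (hD2cont.continuousOn (s := B))
  set K : ℝ := max 1 (max C₀ (max C₁ C₂)) with hKdef
  have hK1 : (1:ℝ) ≤ K := le_max_left _ _
  have hK0 : (0:ℝ) < K := lt_of_lt_of_le one_pos hK1
  have hKF : ∀ x ∈ B, ‖F x‖ ≤ K :=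
    fun x hx => (hC₀ x hx).trans ((le_max_left _ _).trans (le_max_right _ _))
  have hKDF : ∀ x ∈ B, ‖DF x‖ ≤ K :=
    fun x hx => (hC₁ x hx).trans (((le_max_left _ _).trans (le_max_right _ _)).trans
      (le_max_right _ _))
  have hKD2 : ∀ x ∈ B, ‖fderiv ℝ DF x‖ ≤ K :=
    fun x hx => (hC₂ x hx).trans (((le_max_right _ _).trans (le_max_right _ _)).trans
      (le_max_right _ _))
  -- Lipschitz bounds on B
  have hFlip : ∀ x ∈ B, ∀ y ∈ B, ‖F y - F x‖ ≤ K * ‖y - x‖ := by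
    intro x hx y hy
    exact hBconv.norm_image_sub_le_of_norm_hasFDerivWithin_le
      (fun z _ => (hFdiff z).hasFDerivAt.hasFDerivWithinAt) hKDF hx hy
  have hDFlip : ∀ x ∈ B, ∀ y ∈ B, ‖DF y - DF x‖ ≤ K * ‖y - x‖ := by
    intro x hx y hy
    exact hBconv.norm_image_sub_le_of_norm_hasFDerivWithin_le
      (fun z _ => (hDFdiff z).hasFDerivAt.hasFDerivWithinAt) hKD2 hx hy
  have hPbound : ∀ x ∈ B, ‖P x‖ ≤ 2 * K^2 := by
    intro x hx
    have h1 : ‖P x‖ = 2 * ‖(adjoint (DF x)) (F x)‖ := by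
      rw [hPdef]; simp [norm_smul]
    rw [h1]
    have h2 : ‖(adjoint (DF x)) (F x)‖ ≤ ‖adjoint (DF x)‖ * ‖F x‖ := le_opNorm _ _
    have h3 : ‖adjoint (DF x)‖ = ‖DF x‖ := adjNorm' (DF x)
    have := hKF x hx; have := hKDF x hx
    nlinarith [norm_nonneg (F x), norm_nonneg (DF x)]
  have hPlip : ∀ x ∈ B, ‖P x - P θ₀‖ ≤ 4 * K^2 * ‖x - θ₀‖ := by
    intro x hx
    have hsplit : P x - P θ₀ =
        (2:ℝ) • ((adjoint (DF x - DF θ₀)) (F x) + (adjoint (DF θ₀)) (F x - F θ₀)) := by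
      rw [hPdef]
      simp only [ContinuousLinearMap.sub_apply, map_sub]
      module
    rw [hsplit]
    have h1 : ‖(adjoint (DF x - DF θ₀)) (F x)‖ ≤ ‖DF x - DF θ₀‖ * ‖F x‖ := by
      have := le_opNorm (adjoint (DF x - DF θ₀)) (F x)
      rwa [adjNorm' (DF x - DF θ₀)] at this
    have h2 : ‖(adjoint (DF θ₀)) (F x - F θ₀)‖ ≤ ‖DF θ₀‖ * ‖F x - F θ₀‖ := by
      have := le_opNorm (adjoint (DF θ₀)) (F x - F θ₀)
      rwa [adjNorm' (DF θ₀)] at this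
    have h3 := hDFlip θ₀ hθ₀B x hx
    have h4 := hFlip θ₀ hθ₀B x hx
    have h5 := hKF x hx
    have h6 := hKDF θ₀ hθ₀B
    rw [norm_smul]
    simp only [Real.norm_ofNat]
    calc (2:ℝ) * ‖(adjoint (DF x - DF θ₀)) (F x) + (adjoint (DF θ₀)) (F x - F θ₀)‖
        ≤ 2 * (‖(adjoint (DF x - DF θ₀)) (F x)‖ + ‖(adjoint (DF θ₀)) (F x - F θ₀)‖) := by
          have := norm_add_le ((adjoint (DF x - DF θ₀)) (F x)) ((adjoint (DF θ₀)) (F x - F θ₀))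
          linarith
      _ ≤ 4 * K^2 * ‖x - θ₀‖ := by
          nlinarith [norm_nonneg (F x), norm_nonneg (DF θ₀), norm_nonneg (x - θ₀),
            norm_nonneg (DF x - DF θ₀), norm_nonneg (F x - F θ₀)]
  -- Taylor estimate for F at θ₀
  have hTaylor : ∀ x ∈ B, ‖F x - F θ₀ - (DF θ₀) (x - θ₀)‖ ≤ K * ‖x - θ₀‖^2 := by
    intro x hx
    set s := segment ℝ θ₀ x with hsdef
    have hsB : s ⊆ B := hBconv.segment_subset hθ₀B hx
    have hsconv : Convex ℝ s := convex_segment _ _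
    have hseg : ∀ y ∈ s, ‖y - θ₀‖ ≤ ‖x - θ₀‖ := by
      intro y hy
      obtain ⟨a, b, ha, hb, hab, rfl⟩ := hy
      have : a • θ₀ + b • x - θ₀ = b • (x - θ₀) := by
        have ha' : a = 1 - b := by linarith
        rw [ha']; module
      rw [this, norm_smul, Real.norm_of_nonneg hb]
      nlinarith [norm_nonneg (x - θ₀)]
    have key := hsconv.norm_image_sub_le_of_norm_hasFDerivWithin_le
      (f := fun y => F y - (DF θ₀) y) (f' := fun y => DF y - DF θ₀)
      (C := K * ‖x - θ₀‖)
      (fun y hy => ((hFdiff y).hasFDerivAt.sub ((DF θ₀).hasFDerivAt)).hasFDerivWithinAt)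
      (fun y hy => by
        have h1 := hDFlip θ₀ hθ₀B y (hsB hy)
        have h2 := hseg y hy
        nlinarith [norm_nonneg (DF y - DF θ₀)])
      (left_mem_segment ℝ θ₀ x) (right_mem_segment ℝ θ₀ x)
    have heq : F x - (DF θ₀) x - (F θ₀ - (DF θ₀) θ₀) = F x - F θ₀ - (DF θ₀) (x - θ₀) := by
      rw [map_sub]; abel
    rw [heq] at key
    calc ‖F x - F θ₀ - (DF θ₀) (x - θ₀)‖ ≤ K * ‖x - θ₀‖ * ‖x - θ₀‖ := key
      _ = K * ‖x - θ₀‖^2 := by ring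
  -- choose the constants
  refine ⟨3 * K^3, by positivity, 1 / (8 * K^2), by positivity, ?_⟩
  intro h hh0 hhle u hu0 hu'
  have hK2h : 8 * K^2 * h ≤ 1 := by
    rw [le_div_iff₀ (by positivity)] at hhle
    linarith
  have h2Kh : 2 * K * h ≤ 1 := by nlinarith
  have hGgrad : ∀ x, gradient (fun θ => E θ + h / 4 * ‖F θ‖ ^ 2) x = F x + (h/4) • P x := by
    intro x
    exact (gradAdd' E (fun θ => ‖F θ‖^2) (F x) (P x) x (h/4)
      ((hEdiff x).hasGradientAt) (hPgrad x)).gradient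
  set G := fun x => F x + (h/4) • P x with hGdef
  have hu'' : ∀ t ∈ Icc (0:ℝ) h, HasDerivAt u (-(G (u t))) t := by
    intro t ht
    have h1 := hu' t ht
    rwa [hGgrad (u t)] at h1
  have hucont : ContinuousOn u (Icc 0 h) :=
    fun t ht => (hu'' t ht).continuousAt.continuousWithinAt
  have hGcont : Continuous G := hF.continuous.add (Continuous.smul (f := fun _ => h/4) continuous_const hPcont)
  have hGB : ∀ x ∈ B, ‖G x‖ ≤ K + 1/16 := by
    intro x hx
    have h1 := hKF x hx
    have h2 := hPbound x hx
    have h3 : ‖G x‖ ≤ ‖F x‖ + (h/4) * ‖P x‖ := by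
      rw [hGdef]
      refine (norm_add_le _ _).trans ?_
      rw [norm_smul, Real.norm_of_nonneg (by positivity : (0:ℝ) ≤ h/4)]
    nlinarith [norm_nonneg (P x), mul_le_mul_of_nonneg_left h2
      (by positivity : (0:ℝ) ≤ h/4)]
  have hstay : ∀ t ∈ Icc (0:ℝ) h, ‖u t - θ₀‖ ≤ 2*K*t := by
    intro t ht
    have main := image_norm_le_of_norm_deriv_right_lt_deriv_boundary
      (f := fun s => u s - θ₀) (f' := fun s => -(G (u s))) (a := 0) (b := h)
      (B := fun s => 2*K*s) (B' := fun _ => 2*K)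
      (hucont.sub continuousOn_const)
      (fun s hs => ((hu'' s ⟨hs.1, hs.2.le⟩).sub_const θ₀).hasDerivWithinAt)
      (by simp [hu0])
      (fun s => by simpa using (hasDerivAt_id s).const_mul (2*K))
      ?_
    · exact main ht
    · intro s hs heq
      have hsB : u s ∈ B := by
        rw [hBdef, Metric.mem_closedBall, dist_eq_norm]
        have : ‖u s - θ₀‖ = 2*K*s := heq
        nlinarith [hs.1, hs.2.le]
      have h1 := hGB (u s) hsB
      rw [norm_neg]
      calc ‖G (u s)‖ ≤ K + 1/16 := h1
        _ < 2*K := by linarith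
  have huB : ∀ t ∈ Icc (0:ℝ) h, u t ∈ B := by
    intro t ht
    rw [hBdef, Metric.mem_closedBall, dist_eq_norm]
    have h1 := hstay t ht
    nlinarith [ht.1, ht.2]
  have hGu_cont : ContinuousOn (fun t => G (u t)) (Icc 0 h) := hGcont.comp_continuousOn hucont
  have hint : ∀ t ∈ Icc (0:ℝ) h,
      IntervalIntegrable (fun s => G (u s)) MeasureTheory.volume 0 t := by
    intro t ht
    apply ContinuousOn.intervalIntegrable
    apply hGu_cont.mono
    rw [uIcc_of_le ht.1]
    exact Icc_subset_Icc le_rfl ht.2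
  have hrep : ∀ t ∈ Icc (0:ℝ) h, u t - θ₀ = -∫ s in (0:ℝ)..t, G (u s) := by
    intro t ht
    have hder : ∀ s ∈ uIcc (0:ℝ) t, HasDerivAt u (-(G (u s))) s := by
      intro s hs
      rw [uIcc_of_le ht.1] at hs
      exact hu'' s ⟨hs.1, hs.2.trans ht.2⟩
    have heq := intervalIntegral.integral_eq_sub_of_hasDerivAt hder ((hint t ht).neg)
    rw [intervalIntegral.integral_neg, hu0] at heq
    rw [← heq]
  set A := (DF θ₀) (F θ₀) with hAdef
  have hPθ₀ : P θ₀ = (2:ℝ) • A := by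
    show (2:ℝ) • (adjoint (fderiv ℝ (gradient E) θ₀)) (gradient E θ₀)
      = (2:ℝ) • (fderiv ℝ (gradient E) θ₀) (gradient E θ₀)
    rw [hess_symm' E hE θ₀]
  have hkey1 : ∀ t ∈ Icc (0:ℝ) h, ‖u t - θ₀ + t • F θ₀‖ ≤ K^2*t^2 + h*K^2*t/2 := by
    intro t ht
    have hconst : IntervalIntegrable (fun _ : ℝ => F θ₀) MeasureTheory.volume 0 t :=
      intervalIntegrable_const
    have heq : u t - θ₀ + t • F θ₀ = -∫ s in (0:ℝ)..t, (G (u s) - F θ₀) := by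
      rw [intervalIntegral.integral_sub (hint t ht) hconst, intervalIntegral.integral_const,
        hrep t ht]
      module
    rw [heq, norm_neg]
    refine (intervalIntegral.norm_integral_le_abs_of_norm_le
      (g := fun s => 2*K^2*s + h*K^2/2) ?_ ?_).trans ?_
    · refine MeasureTheory.ae_restrict_of_forall_mem measurableSet_uIoc ?_
      intro s hs
      rw [uIoc_of_le ht.1] at hs
      have hsIcc : s ∈ Icc (0:ℝ) h := ⟨hs.1.le, hs.2.trans ht.2⟩
      have h1 := hFlip θ₀ hθ₀B (u s) (huB s hsIcc)
      have h2 := hPbound (u s) (huB s hsIcc)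
      have h3 := hstay s hsIcc
      have h4 : G (u s) - F θ₀ = (F (u s) - F θ₀) + (h/4) • P (u s) := by
        rw [hGdef]; module
      rw [h4]
      refine (norm_add_le _ _).trans ?_
      rw [norm_smul, Real.norm_of_nonneg (by positivity : (0:ℝ) ≤ h/4)]
      nlinarith [mul_le_mul_of_nonneg_left h3 hK0.le,
        mul_le_mul_of_nonneg_left h2 (by positivity : (0:ℝ) ≤ h/4)]
    · exact ((continuous_const.mul continuous_id').add continuous_const).intervalIntegrable 0 t
    · have hcalc : (∫ s in (0:ℝ)..t, (2*K^2*s + h*K^2/2))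
          = K^2*t^2 + h*K^2*t/2 := by
        rw [intervalIntegral.integral_add (f := fun s => 2*K^2*s)
          ((continuous_const.mul continuous_id').intervalIntegrable 0 t)
          intervalIntegrable_const,
          intervalIntegral.integral_const_mul, integral_id, intervalIntegral.integral_const]
        simp; ring
      have hnn : (0:ℝ) ≤ K^2*t^2 + h*K^2*t/2 := by
        nlinarith [ht.1, sq_nonneg (K*t), sq_nonneg K,
          mul_nonneg (mul_nonneg hh0.le (sq_nonneg K)) ht.1]
      rw [hcalc, abs_of_nonneg hnn]
  have hR : ∀ t ∈ Icc (0:ℝ) h, ‖G (u t) - F θ₀ + t • A - (h/2) • A‖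
      ≤ 5*K^3*t^2 + 5/2*h*K^3*t := by
    intro t ht
    have htB := huB t ht
    have hid : G (u t) - F θ₀ + t • A - (h/2) • A
        = (F (u t) - F θ₀ - (DF θ₀) (u t - θ₀)) + (DF θ₀) (u t - θ₀ + t • F θ₀)
          + (h/4) • (P (u t) - P θ₀) := by
      rw [hGdef, hAdef]
      simp only [map_add, map_smul, map_sub, smul_sub, hPθ₀, hAdef]
      module
    rw [hid]
    have h1 := hTaylor (u t) htB
    have h2 := hkey1 t ht
    have h3 := hPlip (u t) htB
    have h4 := hstay t ht
    have h5 := hKDF θ₀ hθ₀B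
    have hDFapp : ‖(DF θ₀) (u t - θ₀ + t • F θ₀)‖ ≤ K * (K^2*t^2 + h*K^2*t/2) := by
      refine (le_opNorm _ _).trans ?_
      exact mul_le_mul h5 h2 (norm_nonneg _) hK0.le
    refine (norm_add₃_le).trans ?_
    rw [norm_smul, Real.norm_of_nonneg (by positivity : (0:ℝ) ≤ h/4)]
    have e1 : ‖u t - θ₀‖^2 ≤ (2*K*t)^2 := by
      nlinarith [norm_nonneg (u t - θ₀)]
    nlinarith [mul_le_mul_of_nonneg_left e1 hK0.le,
      mul_le_mul_of_nonneg_left h3 (by positivity : (0:ℝ) ≤ h/4),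
      mul_le_mul_of_nonneg_left h4 (by positivity : (0:ℝ) ≤ h*K^2),
      ht.1, ht.2, hh0.le, hK1]
  have hhh : h ∈ Icc (0:ℝ) h := ⟨hh0.le, le_rfl⟩
  have hGuInt : IntervalIntegrable (fun s => G (u s)) MeasureTheory.volume 0 h := hint h hhh
  have hconstInt : IntervalIntegrable (fun _ : ℝ => F θ₀) MeasureTheory.volume 0 h :=
    intervalIntegrable_const
  have hsmulInt : IntervalIntegrable (fun s : ℝ => s • A) MeasureTheory.volume 0 h :=
    (continuous_id.smul continuous_const).intervalIntegrable 0 h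
  have hconstInt2 : IntervalIntegrable (fun _ : ℝ => (h/2) • A) MeasureTheory.volume 0 h :=
    intervalIntegrable_const
  have hIv : θ₀ - h • F θ₀ - u h
      = ∫ s in (0:ℝ)..h, (G (u s) - F θ₀ + s • A - (h/2) • A) := by
    rw [intervalIntegral.integral_sub ((hGuInt.sub hconstInt).add hsmulInt) hconstInt2,
      intervalIntegral.integral_add (hGuInt.sub hconstInt) hsmulInt,
      intervalIntegral.integral_sub hGuInt hconstInt,
      intervalIntegral.integral_smul_const, integral_id,
      intervalIntegral.integral_const, intervalIntegral.integral_const]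
    have h2 : (∫ s in (0:ℝ)..h, G (u s)) = θ₀ - u h := by
      have h' := hrep h hhh
      apply neg_injective
      rw [← h']
      abel
    rw [h2]
    ring_nf
    module
  rw [hIv]
  refine (intervalIntegral.norm_integral_le_abs_of_norm_le
    (g := fun t => 5*K^3*t^2 + 5/2*h*K^3*t) ?_ ?_).trans ?_
  · refine MeasureTheory.ae_restrict_of_forall_mem measurableSet_uIoc ?_
    intro s hs
    rw [uIoc_of_le hh0.le] at hs
    exact hR s ⟨hs.1.le, hs.2⟩
  · exact ((continuous_const.mul (continuous_pow 2)).add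
      (continuous_const.mul continuous_id')).intervalIntegrable 0 h
  · have hcalc : (∫ t in (0:ℝ)..h, (5*K^3*t^2 + 5/2*h*K^3*t)) = 5/3*K^3*h^3 + 5/4*K^3*h^3 := by
      rw [intervalIntegral.integral_add (f := fun t => 5*K^3*t^2) (g := fun t => 5/2*h*K^3*t)
        ((continuous_const.mul (continuous_pow 2)).intervalIntegrable 0 h)
        ((continuous_const.mul continuous_id').intervalIntegrable 0 h),
        intervalIntegral.integral_const_mul, intervalIntegral.integral_const_mul,
        integral_pow, integral_id]
      norm_num; ring
    rw [hcalc, abs_of_nonneg (by positivity)]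
    nlinarith [pow_pos hK0 3, pow_pos hh0 3]
end

section
/- Let ε₁,…,εₙ : ℝ^m → ℝ be differentiable scalar error functions, collect them into ε(θ) = (ε₁(θ),…,εₙ(θ)) ∈ ℝⁿ, define E(θ) = Σᵢ εᵢ(θ)², the kernel matrix K(θ) ∈ ℝ^{n×n} with entries K(θ)ᵢⱼ = ⟨∇εᵢ(θ), ∇εⱼ(θ)⟩, and the modified loss Ẽ(θ) = E(θ) + (h/4)‖∇E(θ)‖². Then Ẽ(θ) = ε(θ)ᵀ (I_n + h·K(θ)) ε(θ) for all θ ∈ ℝ^m. -/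
open RealInnerProductSpace

/-- For differentiable scalar error functions `εᵢ : ℝ^m → ℝ`, the
least-squares loss `E(θ) = Σᵢ εᵢ(θ)²` and the NTK matrix `K(θ)ᵢⱼ = ⟨∇εᵢ(θ), ∇εⱼ(θ)⟩`,
the modified loss satisfies `Ẽ(θ) = E(θ) + (h/4)‖∇E(θ)‖² = ε(θ)ᵀ (Iₙ + h K(θ)) ε(θ)`. -/
theorem modified_loss_eq_ntk_quadratic_form (m n : ℕ)
    (ε : Fin n → EuclideanSpace ℝ (Fin m) → ℝ) (hε : ∀ i, Differentiable ℝ (ε i))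
    (h : ℝ) (θ : EuclideanSpace ℝ (Fin m)) :
    (∑ i, (ε i θ) ^ 2) + (h / 4) * ‖gradient (fun x => ∑ i, (ε i x) ^ 2) θ‖ ^ 2
      = dotProduct (fun i => ε i θ)
          (((1 : Matrix (Fin n) (Fin n) ℝ) +
              h • Matrix.of fun i j => ⟪gradient (ε i) θ, gradient (ε j) θ⟫).mulVec
            (fun i => ε i θ)) := by
  set g : Fin n → EuclideanSpace ℝ (Fin m) := fun i => gradient (ε i) θ with hg
  have key : HasGradientAt (fun x => ∑ i, ε i x ^ 2) (∑ i, (2 * ε i θ) • g i) θ := by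
    rw [hasGradientAt_iff_hasFDerivAt, map_sum]
    apply HasFDerivAt.fun_sum
    intro i _
    have hgi : HasFDerivAt (ε i) (InnerProductSpace.toDual ℝ _ (g i)) θ :=
      ((hε i θ).hasGradientAt).hasFDerivAt
    have := hgi.mul hgi
    simp only [← pow_two] at this
    refine this.congr_fderiv ?_
    rw [map_smul]
    module
  rw [key.gradient]
  have hnorm : ‖∑ i, (2 * ε i θ) • g i‖ ^ 2
      = ∑ i, ∑ j, (2 * ε i θ) * (2 * ε j θ) * ⟪g i, g j⟫ := by
    rw [← real_inner_self_eq_norm_sq, inner_sum]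
    congr 1; ext j
    rw [sum_inner]
    congr 1; ext i
    rw [real_inner_smul_left, real_inner_smul_right, real_inner_comm]
    ring
  rw [hnorm]
  simp only [dotProduct, Matrix.mulVec, Matrix.add_apply, Matrix.one_apply,
    Matrix.smul_apply, Matrix.of_apply, smul_eq_mul]
  simp only [add_mul, mul_add, Finset.sum_add_distrib]
  congr 1
  · symm
    refine Finset.sum_congr rfl fun i _ => ?_
    rw [Finset.sum_eq_single i]
    · simp [pow_two]
    · intro j _ hj; simp [Ne.symm hj]
    · simp
  · simp only [Finset.mul_sum]
    exact Finset.sum_congr rfl fun i _ => Finset.sum_congr rfl fun j _ => by ring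
end
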